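/- For any integer n and integers r, s ≥ 0, the (q,π)-trinomial coefficient satisfies [n choose r,s]_{q,π} = π^s q^{s-r}·[n-1 choose r,s]_{q,π} + (πq)^{n-r}·[n-1 choose r-1,s]_{q,π} + q^{s-n}·[n-1 choose r,s-1]_{q,π}. -/

import Mathlib

open scoped Classical

noncomputable section

/-- A concrete model of the ring `ℚ(q)^π := ℚ(q)[π]/(π² - 1)`: since `2` is
invertible, the Chinese Remainder Theorem (evaluating `π` at `±1`) identifies it
with `ℚ(q) × ℚ(q)`, with `q = (q, q)` and `π = (1, -1)`. -/
abbrev Rqpi : Type := RatFunc ℚ × RatFunc ℚ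

/-- The element `q` of `ℚ(q)^π`. -/
def qv : Rqpi := (RatFunc.X, RatFunc.X)

/-- The element `π` of `ℚ(q)^π`. -/
def piv : Rqpi := (1, -1)

/-- The `(q,π)`-integer `[n]_{q,π} = ((πq)^n - q^{-n}) / (πq - q^{-1})`. -/
def qint (n : ℤ) : Rqpi :=
  ((piv * qv) ^ n - qv ^ (-n)) / (piv * qv - qv ^ (-1 : ℤ))

/-- The `(q,π)`-factorial `[n]!_{q,π} = [n]_{q,π} [n-1]_{q,π} ⋯ [1]_{q,π}`. -/
def qfact (n : ℕ) : Rqpi := ∏ i ∈ Finset.range n, qint ((i : ℤ) + 1)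

/-- The `(q,π)`-binomial coefficient
`[n choose r]_{q,π} = [n]_{q,π} [n-1]_{q,π} ⋯ [n-r+1]_{q,π} / [r]!_{q,π}`,
with the convention that it is `0` for `r < 0`. -/
def qbinom (n r : ℤ) : Rqpi :=
  if r < 0 then 0
  else (∏ i ∈ Finset.range r.toNat, qint (n - (i : ℤ))) / qfact r.toNat


/-- The `(q,π)`-trinomial coefficient `[n choose r,s]_{q,π} = [n choose r]_{q,π} · [n-r choose s]_{q,π}`
(it vanishes when `r < 0` or `s < 0`). -/
def qtrinom (n r s : ℤ) : Rqpi := qbinom n r * qbinom (n - r) s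


namespace QPiAux

variable {K : Type*} [Field K]

def gint (e x : K) (n : ℤ) : K := ((e*x)^n - x^(-n))/(e*x - x^(-1:ℤ))

def gP (e x : K) (n : ℤ) (k : ℕ) : K := ∏ i ∈ Finset.range k, gint e x (n - (i:ℤ))

def gfact (e x : K) (k : ℕ) : K := ∏ i ∈ Finset.range k, gint e x ((i:ℤ)+1)

def gbinom (e x : K) (n r : ℤ) : K :=
  if r < 0 then 0 else gP e x n r.toNat / gfact e x r.toNat

def gtrinom (e x : K) (n r s : ℤ) : K := gbinom e x n r * gbinom e x (n-r) s

variable {e x : K} (he : e ≠ 0) (hx : x ≠ 0)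
  (hne : ∀ r : ℤ, 1 ≤ r → (e*x)^r ≠ x^(-r))

section
include he hx hne

lemma hex : e * x ≠ 0 := mul_ne_zero he hx

lemma hd : e*x - x^(-1:ℤ) ≠ 0 := by
  have h := hne 1 le_rfl
  rw [zpow_one] at h
  exact sub_ne_zero.2 h

lemma gint_ne {n : ℤ} (hn : 1 ≤ n) : gint e x n ≠ 0 :=
  div_ne_zero (sub_ne_zero.2 (hne n hn)) (hd he hx hne)

lemma gfact_ne (k : ℕ) : gfact e x k ≠ 0 :=
  Finset.prod_ne_zero_iff.2 fun i _ => gint_ne he hx hne (by omega)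

lemma coreB (n r : ℤ) :
    gint e x n = x^(-r) * gint e x (n-r) + (e*x)^(n-r) * gint e x r := by
  unfold gint
  rw [← mul_div_assoc, ← mul_div_assoc, ← add_div]
  congr 1
  have h1 : (e*x)^(n-r) * (e*x)^r = (e*x)^n := by
    rw [← zpow_add₀ (hex he hx hne)]; ring_nf
  have h2 : x^(-r) * x^(-(n-r)) = x^(-n) := by
    rw [← zpow_add₀ hx]; ring_nf
  linear_combination h2 - h1

lemma coreA (n r : ℤ) :
    gint e x n = (e*x)^r * gint e x (n-r) + x^(r-n) * gint e x r := by
  unfold gint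
  rw [← mul_div_assoc, ← mul_div_assoc, ← add_div]
  congr 1
  have h1 : (e*x)^r * (e*x)^(n-r) = (e*x)^n := by
    rw [← zpow_add₀ (hex he hx hne)]; ring_nf
  have h2 : x^(r-n) * x^(-r) = x^(-n) := by
    rw [← zpow_add₀ hx]; ring_nf
  have h3 : x^(-(n-r)) = x^(r-n) := by rw [neg_sub]
  linear_combination h2 - h1 + (e*x)^r * h3

omit he hx hne in
lemma gbinom_nat (n : ℤ) (k : ℕ) :
    gbinom e x n (k : ℤ) = gP e x n k / gfact e x k := by
  unfold gbinom
  rw [if_neg (by omega), Int.toNat_natCast]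

lemma pascalB (n r : ℤ) (hr : 0 ≤ r) :
    gbinom e x n r = x^(-r) * gbinom e x (n-1) r + (e*x)^(n-r) * gbinom e x (n-1) (r-1) := by
  obtain ⟨k, rfl⟩ := Int.eq_ofNat_of_zero_le hr
  cases k with
  | zero => simp [gbinom, gP, gfact]
  | succ m =>
    have h1 : ((m+1 : ℕ) : ℤ) - 1 = (m : ℤ) := by push_cast; ring
    rw [gbinom_nat, gbinom_nat, h1, gbinom_nat]
    have hPn : gP e x n (m+1) = gint e x n * gP e x (n-1) m := by
      rw [gP, Finset.prod_range_succ']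
      simp only [Nat.cast_zero, sub_zero, gP]
      rw [mul_comm]
      congr 1
      apply Finset.prod_congr rfl
      intro i _
      congr 1
      push_cast; ring
    have hPn1 : gP e x (n-1) (m+1) = gP e x (n-1) m * gint e x (n-1-m) := by
      rw [gP, Finset.prod_range_succ]; rfl
    have hF : gfact e x (m+1) = gfact e x m * gint e x ((m:ℤ)+1) := by
      rw [gfact, gfact, Finset.prod_range_succ]
    have hFm := gfact_ne he hx hne m
    have hI : gint e x ((m:ℤ)+1) ≠ 0 := gint_ne he hx hne (by omega)
    rw [hPn, hPn1, hF]
    have hcore := coreB he hx hne n ((m:ℕ)+1 : ℤ)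
    have harg : n - ((m:ℕ)+1 : ℤ) = n - 1 - m := by ring
    rw [harg] at hcore
    have hz1 : x ^ (-1 + -(m:ℤ)) = x ^ (-((m:ℤ)+1)) := by
      rw [show (-1 + -(m:ℤ)) = -((m:ℤ)+1) by ring]
    have hz2 : (e*x) ^ (n-((m:ℤ)+1)) = (e*x) ^ (n-1-(m:ℤ)) := by
      rw [show (n-((m:ℤ)+1)) = n-1-(m:ℤ) by ring]
    push_cast
    field_simp
    rw [hz2]
    linear_combination (gP e x (n-1) m) * hcore

lemma pascalA (n s : ℤ) (hs : 0 ≤ s) :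
    gbinom e x n s = (e*x)^s * gbinom e x (n-1) s + x^(s-n) * gbinom e x (n-1) (s-1) := by
  obtain ⟨k, rfl⟩ := Int.eq_ofNat_of_zero_le hs
  cases k with
  | zero => simp [gbinom, gP, gfact]
  | succ m =>
    have h1 : ((m+1 : ℕ) : ℤ) - 1 = (m : ℤ) := by push_cast; ring
    rw [gbinom_nat, gbinom_nat, h1, gbinom_nat]
    have hPn : gP e x n (m+1) = gint e x n * gP e x (n-1) m := by
      rw [gP, Finset.prod_range_succ']
      simp only [Nat.cast_zero, sub_zero, gP]
      rw [mul_comm]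
      congr 1
      apply Finset.prod_congr rfl
      intro i _
      congr 1
      push_cast; ring
    have hPn1 : gP e x (n-1) (m+1) = gP e x (n-1) m * gint e x (n-1-m) := by
      rw [gP, Finset.prod_range_succ]; rfl
    have hF : gfact e x (m+1) = gfact e x m * gint e x ((m:ℤ)+1) := by
      rw [gfact, gfact, Finset.prod_range_succ]
    have hFm := gfact_ne he hx hne m
    have hI : gint e x ((m:ℤ)+1) ≠ 0 := gint_ne he hx hne (by omega)
    rw [hPn, hPn1, hF]
    have hcore := coreA he hx hne n ((m:ℕ)+1 : ℤ)
    have harg : n - ((m:ℕ)+1 : ℤ) = n - 1 - m := by ring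
    rw [harg] at hcore
    push_cast
    field_simp
    linear_combination (gP e x (n-1) m) * hcore

lemma gtri (n r s : ℤ) (hr : 0 ≤ r) (hs : 0 ≤ s) :
    gtrinom e x n r s =
      e^s * x^(s-r) * gtrinom e x (n-1) r s +
        (e*x)^(n-r) * gtrinom e x (n-1) (r-1) s +
        x^(s-n) * gtrinom e x (n-1) r (s-1) := by
  have pB := pascalB he hx hne n r hr
  have pA := pascalA he hx hne (n-r) s hs
  rw [show n-r-1 = n-1-r from by ring] at pA
  have hc1 : x^(-r) * (e*x)^s = e^s * x^(s-r) := by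
    rw [mul_zpow, mul_left_comm, ← zpow_add₀ hx, show (-r)+s = s-r from by ring]
  have hc2 : x^(-r) * x^(s-(n-r)) = x^(s-n) := by
    rw [← zpow_add₀ hx, show (-r)+(s-(n-r)) = s-n from by ring]
  unfold gtrinom
  rw [show n-1-(r-1) = n-r from by ring, pB, pA]
  linear_combination (gbinom e x (n-1) r * gbinom e x (n-1-r) s) * hc1 +
    (gbinom e x (n-1) r * gbinom e x (n-1-r) (s-1)) * hc2

end

lemma key_ne (e : RatFunc ℚ) (he : e = 1 ∨ e = -1) :
    ∀ r : ℤ, 1 ≤ r → (e * RatFunc.X) ^ r ≠ RatFunc.X ^ (-r) := by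
  intro r hr h
  have hX : (RatFunc.X : RatFunc ℚ) ≠ 0 := RatFunc.X_ne_zero
  have hee : e * e = 1 := by rcases he with h1 | h1 <;> rw [h1] <;> ring
  have h1 : e ^ r * e ^ r = 1 := by rw [← mul_zpow, hee, one_zpow]
  have h2 : e ^ r = 1 ∨ e ^ r = -1 := mul_self_eq_one_iff.1 h1
  rw [mul_zpow] at h
  have h3 : e ^ r * ((RatFunc.X : RatFunc ℚ) ^ r * RatFunc.X ^ r) = 1 := by
    rw [← mul_assoc, h, ← zpow_add₀ hX]
    simp
  have h4 : (RatFunc.X : RatFunc ℚ) ^ (r + r) = 1 ∨ (RatFunc.X : RatFunc ℚ) ^ (r + r) = -1 := by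
    rw [zpow_add₀ hX]
    rcases h2 with h2 | h2 <;> rw [h2] at h3 <;>
      [left; right] <;> [linear_combination h3; linear_combination -h3]
  obtain ⟨k, hk⟩ : ∃ k : ℕ, (r + r) = (k : ℤ) :=
    ⟨(r + r).toNat, (Int.toNat_of_nonneg (by omega)).symm⟩
  have hk2 : (RatFunc.X : RatFunc ℚ) ^ (r + r) = (RatFunc.X : RatFunc ℚ) ^ k := by
    rw [hk, zpow_natCast]
  have hkk : 2 ≤ k := by omega
  have hinj := RatFunc.algebraMap_injective ℚ
  rcases h4 with h4 | h4 <;> rw [hk2] at h4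
  · have h5 : Polynomial.X ^ k = (1 : Polynomial ℚ) := by
      apply hinj
      simpa [map_pow, RatFunc.algebraMap_X] using h4
    have := congrArg Polynomial.natDegree h5
    simp [Polynomial.natDegree_X_pow] at this
    omega
  · have h5 : Polynomial.X ^ k = (-1 : Polynomial ℚ) := by
      apply hinj
      simpa [map_pow, RatFunc.algebraMap_X] using h4
    have := congrArg Polynomial.natDegree h5
    simp [Polynomial.natDegree_X_pow] at this
    omega

end QPiAux

section Bridge

lemma fst_zpow (a : Rqpi) (n : ℤ) : (a ^ n).1 = a.1 ^ n := rfl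
lemma snd_zpow (a : Rqpi) (n : ℤ) : (a ^ n).2 = a.2 ^ n := rfl

lemma qint_fst (n : ℤ) : (qint n).1 = QPiAux.gint 1 RatFunc.X n := by
  simp only [qint, QPiAux.gint, Prod.fst_div, Prod.fst_sub, fst_zpow, Prod.fst_mul, piv, qv]

lemma qint_snd (n : ℤ) : (qint n).2 = QPiAux.gint (-1) RatFunc.X n := by
  simp only [qint, QPiAux.gint, Prod.snd_div, Prod.snd_sub, snd_zpow, Prod.snd_mul, piv, qv]

lemma qfact_fst (k : ℕ) : (qfact k).1 = QPiAux.gfact 1 RatFunc.X k := by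
  simp only [qfact, QPiAux.gfact, Prod.fst_prod, qint_fst]

lemma qfact_snd (k : ℕ) : (qfact k).2 = QPiAux.gfact (-1) RatFunc.X k := by
  simp only [qfact, QPiAux.gfact, Prod.snd_prod, qint_snd]

lemma qbinom_fst (n r : ℤ) : (qbinom n r).1 = QPiAux.gbinom 1 RatFunc.X n r := by
  unfold qbinom QPiAux.gbinom
  split
  · rfl
  · simp only [Prod.fst_div, Prod.fst_prod, qint_fst, qfact_fst, QPiAux.gP]

lemma qbinom_snd (n r : ℤ) : (qbinom n r).2 = QPiAux.gbinom (-1) RatFunc.X n r := by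
  unfold qbinom QPiAux.gbinom
  split
  · rfl
  · simp only [Prod.snd_div, Prod.snd_prod, qint_snd, qfact_snd, QPiAux.gP]

lemma qtrinom_fst (n r s : ℤ) : (qtrinom n r s).1 = QPiAux.gtrinom 1 RatFunc.X n r s := by
  simp only [qtrinom, QPiAux.gtrinom, Prod.fst_mul, qbinom_fst]

lemma qtrinom_snd (n r s : ℤ) : (qtrinom n r s).2 = QPiAux.gtrinom (-1) RatFunc.X n r s := by
  simp only [qtrinom, QPiAux.gtrinom, Prod.snd_mul, qbinom_snd]

end Bridge

/-- The Pascal-type recursion for `(q,π)`-trinomial coefficients. -/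
theorem statement2 (n r s : ℤ) (hr : 0 ≤ r) (hs : 0 ≤ s) :
    qtrinom n r s =
      piv ^ s * qv ^ (s - r) * qtrinom (n - 1) r s +
        (piv * qv) ^ (n - r) * qtrinom (n - 1) (r - 1) s +
        qv ^ (s - n) * qtrinom (n - 1) r (s - 1) := by
  have h1 := QPiAux.gtri (e := (1 : RatFunc ℚ)) (x := RatFunc.X) one_ne_zero
    RatFunc.X_ne_zero (QPiAux.key_ne 1 (Or.inl rfl)) n r s hr hs
  have h2 := QPiAux.gtri (e := (-1 : RatFunc ℚ)) (x := RatFunc.X) (by norm_num)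
    RatFunc.X_ne_zero (QPiAux.key_ne (-1) (Or.inr rfl)) n r s hr hs
  refine Prod.ext ?_ ?_
  · simp only [qtrinom_fst, Prod.fst_add, Prod.fst_mul, fst_zpow, piv, qv]
    exact h1
  · simp only [qtrinom_snd, Prod.snd_add, Prod.snd_mul, snd_zpow, piv, qv]
    exact h2
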